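/- Let (R, m) be a Noetherian local ring of characteristic p, I an ideal with a regular sequence of generators, and suppose f·J^{*a} ⊆ K^{*a} and K : f = J for ideals J ⊆ K and a nonzerodivisor f. Then K : K^{*a} ⊆ J : J^{*a}. -/
import Mathlib

/-- The complement of the union of the minimal primes of `R`. -/
def ringReg (R : Type*) [CommRing R] : Set R :=
  {c | ∀ P ∈ minimalPrimes R, c ∉ P}

/-- The `q`-th Frobenius power `J^{[q]}` of an ideal. -/
def frobPow {R : Type*} [CommRing R] (J : Ideal R) (q : ℕ) : Ideal R :=
  Ideal.span ((fun x => x ^ q) '' (J : Set R))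

/-- The `a`-tight closure of an ideal `J` in a ring of characteristic `p`. -/
def aTightClosure {R : Type*} [CommRing R] (p : ℕ) (a J : Ideal R) : Set R :=
  {z | ∃ c ∈ ringReg R, ∃ E : ℕ, ∀ e ≥ E, ∀ y ∈ a ^ (p ^ e),
    c * y * z ^ (p ^ e) ∈ frobPow J (p ^ e)}

/-- Let `(R,m)` be Noetherian local of characteristic `p`, `I` an ideal generated by a
regular sequence, `a` an ideal, `J ⊆ K` ideals and `f` a nonzerodivisor with
`f·J^{*a} ⊆ K^{*a}` and `K : f = J`.  Then `K : K^{*a} ⊆ J : J^{*a}`. -/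
theorem stmt11 {R : Type*} [CommRing R] [IsNoetherianRing R] [IsLocalRing R]
    (p : ℕ) (hp : p.Prime) [CharP R p]
    {d : ℕ} (g : Fin d → R)
    (hreg : RingTheory.Sequence.IsRegular R (List.ofFn g))
    (I : Ideal R) (hI : I = Ideal.span (Set.range g))
    (a J K : Ideal R) (hJK : J ≤ K)
    (f : R) (hf : f ∈ nonZeroDivisors R)
    (hmul : ∀ z ∈ aTightClosure p a J, f * z ∈ aTightClosure p a K)
    (hcolon : K.colon (Ideal.span {f}) = J) :
    ∀ r : R, (∀ z ∈ aTightClosure p a K, r * z ∈ K) →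
      ∀ z ∈ aTightClosure p a J, r * z ∈ J := by
  intro r hr z hz
  have h1 : r * (f * z) ∈ K := hr _ (hmul z hz)
  rw [← hcolon, Ideal.mem_colon_span_singleton]
  rw [show r * z * f = r * (f * z) by ring]
  exact h1
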